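/- With the notation of the previous statement, for each n ≥ 1 the set G_n = {r ∈ R : π_r(x_i) ≠ π_r(x_j) for all 1 ≤ i < j ≤ n} is open and dense in R (with the supremum metric / product topology), and consequently there exists r ∈ R such that π_r : X → ℝ is injective. -/

import Mathlib

/-- The compact product space `R = ∏_{k} [0, 1/2^(k+1)]`. -/
abbrev RSpace : Type := (k : ℕ) → Set.Icc (0 : ℝ) (1 / 2 ^ (k + 1))

/-- `π_r(x) = ∑_k r_k · m(x, x_k)`. -/
noncomputable def piMap {X : Type*} [MetricSpace X] (e : ℕ → X) (r : RSpace) (a : X) : ℝ :=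
  ∑' k, (r k : ℝ) * dist a (e k)



lemma summable_bound : Summable (fun k : ℕ => (1:ℝ) / 2 ^ (k + 1)) := by
  have : (fun k : ℕ => (1:ℝ) / 2 ^ (k + 1)) = fun k : ℕ => (1/2:ℝ)^k * (1/2) := by
    funext k; rw [pow_succ, one_div_pow]; ring
  rw [this]
  exact summable_geometric_two.mul_right _

lemma summable_piMap {X : Type*} [MetricSpace X] (e : ℕ → X)
    (hdiam : ∀ a b : X, dist a b ≤ 1) (r : RSpace) (a : X) :
    Summable fun k => (r k : ℝ) * dist a (e k) := by
  apply Summable.of_nonneg_of_le (fun k => mul_nonneg (r k).2.1 dist_nonneg)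
    (fun k => ?_) summable_bound
  calc (r k : ℝ) * dist a (e k) ≤ (1 / 2 ^ (k+1)) * 1 :=
        mul_le_mul (r k).2.2 (hdiam _ _) dist_nonneg (by positivity)
    _ = 1 / 2 ^ (k+1) := mul_one _

lemma continuous_piMap {X : Type*} [MetricSpace X] (e : ℕ → X)
    (hdiam : ∀ a b : X, dist a b ≤ 1) (a : X) :
    Continuous fun r : RSpace => piMap e r a := by
  apply continuous_tsum (u := fun k : ℕ => (1:ℝ)/2^(k+1))
  · intro k
    exact (continuous_subtype_val.comp (continuous_apply k)).mul continuous_const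
  · exact summable_bound
  · intro k r
    rw [Real.norm_eq_abs, abs_of_nonneg (mul_nonneg (r k).2.1 dist_nonneg)]
    calc (r k : ℝ) * dist a (e k) ≤ (1 / 2 ^ (k+1)) * 1 :=
          mul_le_mul (r k).2.2 (hdiam _ _) dist_nonneg (by positivity)
      _ = 1 / 2 ^ (k+1) := mul_one _

lemma piMap_update {X : Type*} [MetricSpace X] (e : ℕ → X)
    (hdiam : ∀ a b : X, dist a b ≤ 1) (r : RSpace) (j : ℕ)
    (t : Set.Icc (0:ℝ) (1 / 2 ^ (j+1))) (a : X) :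
    piMap e (Function.update r j t) a = piMap e r a + ((t:ℝ) - r j) * dist a (e j) := by
  have key : ∀ k, ((Function.update r j t k : ℝ)) * dist a (e k)
      = (r k : ℝ) * dist a (e k) + (if k = j then ((t:ℝ) - r j) * dist a (e j) else 0) := by
    intro k
    by_cases hk : k = j
    · subst hk; simp [Function.update_self]; ring
    · simp [Function.update_of_ne hk, hk]
  unfold piMap
  calc ∑' k, ((Function.update r j t k : ℝ)) * dist a (e k)
      = ∑' k, ((r k : ℝ) * dist a (e k) + (if k = j then ((t:ℝ) - r j) * dist a (e j) else 0)) := by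
        exact tsum_congr key
    _ = (∑' k, (r k : ℝ) * dist a (e k)) + ∑' k, (if k = j then ((t:ℝ) - r j) * dist a (e j) else 0) := by
        apply Summable.tsum_add (summable_piMap e hdiam r a)
        exact summable_of_ne_finset_zero (s := {j}) (fun k hk => by
          simp at hk; simp [hk])
    _ = piMap e r a + ((t:ℝ) - r j) * dist a (e j) := by
        rw [tsum_ite_eq]; rfl

lemma isOpen_pair {X : Type*} [MetricSpace X] (e : ℕ → X)
    (hdiam : ∀ a b : X, dist a b ≤ 1) (i j : ℕ) :
    IsOpen {r : RSpace | piMap e r (e i) ≠ piMap e r (e j)} :=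
  isOpen_ne_fun (continuous_piMap e hdiam (e i)) (continuous_piMap e hdiam (e j))

lemma dense_pair {X : Type*} [MetricSpace X] (e : ℕ → X) (hinj : Function.Injective e)
    (hdiam : ∀ a b : X, dist a b ≤ 1) {i j : ℕ} (hij : i ≠ j) :
    Dense {r : RSpace | piMap e r (e i) ≠ piMap e r (e j)} := by
  rw [dense_iff_inter_open]
  rintro U hU ⟨r, hr⟩
  by_cases h : piMap e r (e i) ≠ piMap e r (e j)
  · exact ⟨r, hr, h⟩
  push_neg at h
  have hc : (0:ℝ) < 1 / 2 ^ (j + 1) := by positivity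
  haveI : Nontrivial (Set.Icc (0:ℝ) (1 / 2 ^ (j+1))) :=
    ⟨⟨0, le_refl 0, hc.le⟩, ⟨1 / 2 ^ (j+1), hc.le, le_refl _⟩, by
      simp [Subtype.ext_iff]; positivity⟩
  set g : Set.Icc (0:ℝ) (1 / 2 ^ (j+1)) → RSpace := fun t => Function.update r j t with hg
  have hgc : Continuous g := by
    exact continuous_const.update j continuous_id
  have hgr : g (r j) = r := Function.update_eq_self j r
  have hmem : g ⁻¹' U ∈ nhds (r j) := hgc.continuousAt.preimage_mem_nhds (by rw [hgr]; exact hU.mem_nhds hr)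
  have hmem' : g ⁻¹' U ∈ nhdsWithin (r j) {r j}ᶜ := nhdsWithin_le_nhds hmem
  obtain ⟨t, htU, htne⟩ := (Filter.nonempty_of_mem
    (Filter.inter_mem hmem' self_mem_nhdsWithin) : (g ⁻¹' U ∩ {r j}ᶜ).Nonempty)
  refine ⟨g t, htU, ?_⟩
  have hdij : 0 < dist (e i) (e j) := dist_pos.2 (fun he => hij (hinj he))
  have h1 : piMap e (g t) (e i) = piMap e r (e i) + ((t:ℝ) - r j) * dist (e i) (e j) :=
    piMap_update e hdiam r j t (e i)
  have h2 : piMap e (g t) (e j) = piMap e r (e j) := by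
    rw [hg]; rw [piMap_update e hdiam r j t (e j)]; simp
  simp only [Set.mem_setOf_eq, h1, h2, h]
  intro habs
  have ht0 : ((t:ℝ) - r j) * dist (e i) (e j) = 0 := by linarith
  rcases mul_eq_zero.1 ht0 with h' | h'
  · exact htne (by simp only [Set.mem_compl_iff, Set.mem_singleton_iff, not_not] at *; exact Subtype.ext (by linarith))
  · exact hdij.ne' h'

lemma isOpen_imp {A : Prop} {S : Set RSpace} (hS : IsOpen S) : IsOpen {r : RSpace | A → r ∈ S} := by
  by_cases hA : A
  · simpa [hA] using hS
  · simp [hA]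

lemma dense_imp {A : Prop} {S : Set RSpace} (hS : A → Dense S) : Dense {r : RSpace | A → r ∈ S} := by
  by_cases hA : A
  · simpa [hA] using hS hA
  · simp [hA]


/-- Each set `G_n = {r ∈ R : π_r(x_i) ≠ π_r(x_j) for i < j ≤ n}` is open and dense
in `R`, and consequently there is `r ∈ R` with `π_r` injective. -/
theorem stmt7 {X : Type*} [MetricSpace X] [Countable X]
    (e : ℕ → X) (hbij : Function.Bijective e)
    (hdiam : ∀ a b : X, dist a b ≤ 1) :
    (∀ n : ℕ,
      IsOpen {r : RSpace | ∀ i j, 1 ≤ i → i < j → j ≤ n → piMap e r (e i) ≠ piMap e r (e j)} ∧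
      Dense {r : RSpace | ∀ i j, 1 ≤ i → i < j → j ≤ n → piMap e r (e i) ≠ piMap e r (e j)})
      ∧ ∃ r : RSpace, Function.Injective (piMap e r) := by
  haveI : Nonempty RSpace := ⟨fun k => ⟨0, le_refl 0, by positivity⟩⟩
  constructor
  · intro n
    have heq : {r : RSpace | ∀ i j, 1 ≤ i → i < j → j ≤ n → piMap e r (e i) ≠ piMap e r (e j)}
        = ⋂ (p : Fin (n+1) × Fin (n+1)),
          {r : RSpace | 1 ≤ (p.1 : ℕ) → (p.1 : ℕ) < (p.2 : ℕ) → (p.2 : ℕ) ≤ n →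
            piMap e r (e p.1) ≠ piMap e r (e p.2)} := by
      ext r
      simp only [Set.mem_setOf_eq, Set.mem_iInter]
      constructor
      · intro h p h1 h2 h3; exact h _ _ h1 h2 h3
      · intro h i j h1 h2 h3
        exact h (⟨i, by omega⟩, ⟨j, by omega⟩) h1 h2 h3
    rw [heq]
    constructor
    · exact isOpen_iInter_of_finite fun p =>
        isOpen_imp (isOpen_imp (isOpen_imp (isOpen_pair e hdiam _ _)))
    · exact dense_iInter_of_isOpen
        (fun p => isOpen_imp (isOpen_imp (isOpen_imp (isOpen_pair e hdiam _ _))))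
        (fun p => dense_imp fun _ => dense_imp fun h2 => dense_imp fun _ =>
          dense_pair e hbij.1 hdiam (Nat.ne_of_lt h2))
  · have hd : Dense (⋂ p : ℕ × ℕ,
        {r : RSpace | p.1 ≠ p.2 → piMap e r (e p.1) ≠ piMap e r (e p.2)}) :=
      dense_iInter_of_isOpen
        (fun p => isOpen_imp (isOpen_pair e hdiam _ _))
        (fun p => dense_imp fun h => dense_pair e hbij.1 hdiam h)
    obtain ⟨r, hr⟩ := hd.nonempty
    refine ⟨r, fun a b hab => ?_⟩
    obtain ⟨i, rfl⟩ := hbij.2 a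
    obtain ⟨j, rfl⟩ := hbij.2 b
    by_contra hne
    have hij : i ≠ j := fun h => hne (by rw [h])
    exact (Set.mem_iInter.1 hr (i, j)) hij hab
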